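/- Every oracle satisfying the promise of the Bernstein–Vazirani Parity Problem with a nonzero key also satisfies the Haar promise: if x: {0,...,2^n-1} → {0,1} is given by x_i = i · k (bitwise inner product mod 2) for some nonzero k ∈ {0,1}^n, then x satisfies the Haar promise with parameter h* equal to one plus the position of the least significant nonzero bit of k (bits indexed from 0). -/

import Mathlib

open Finset

/-- The Haar step function: 1 on [0,1/2), -1 on [1/2,1), 0 elsewhere. -/
noncomputable def haarStep (t : ℝ) : ℝ :=
  if 0 ≤ t ∧ t < 1 / 2 then 1 else if 1 / 2 ≤ t ∧ t < 1 then -1 else 0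

/-- The un-normalized Haar wavelet vector ψ_{h,l} ∈ ℝ^{2^n}, with
entries (ψ_{h,l})_i = ψ(2^{-h} i - (l - 1)). -/
noncomputable def haarPsi (n h l : ℕ) : Fin (2 ^ n) → ℝ :=
  fun i => haarStep ((i : ℝ) / 2 ^ h - ((l : ℝ) - 1))

/-- The Haar promise with parameter h* ∈ {1,…,n}: there exist bits b_l,
l ∈ {1,…,2^{n-h*}}, with x_i = b_l for 2^{h*}(l-1) ≤ i < 2^{h*}(l-1/2) and
x_i = ¬ b_l for 2^{h*}(l-1/2) ≤ i < 2^{h*} l (inequalities cleared of the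
factor 1/2 by doubling). -/
def HaarPromise (n h : ℕ) (x : Fin (2 ^ n) → Bool) : Prop :=
  1 ≤ h ∧ h ≤ n ∧ ∃ b : ℕ → Bool, ∀ l, 1 ≤ l → l ≤ 2 ^ (n - h) →
    ∀ i : Fin (2 ^ n),
      (2 ^ h * (l - 1) ≤ (i : ℕ) ∧ 2 * (i : ℕ) < 2 ^ h * (2 * l - 1) →
        x i = b l) ∧
      (2 ^ h * (2 * l - 1) ≤ 2 * (i : ℕ) ∧ (i : ℕ) < 2 ^ h * l →
        x i = !(b l))

/-- The vector ξ_x ∈ ℝ^{2^n} with entries (-1)^{x_i}. -/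
noncomputable def xiVec (n : ℕ) (x : Fin (2 ^ n) → Bool) : Fin (2 ^ n) → ℝ :=
  fun i => if x i then -1 else 1

/-- The Bernstein–Vazirani oracle x_i = i · k (bitwise inner product mod 2). -/
def bvOracle (n k : ℕ) : Fin (2 ^ n) → Bool :=
  fun i => decide (Odd (∑ j ∈ Finset.range n,
    if Nat.testBit (i : ℕ) j && Nat.testBit k j then 1 else 0))

/-- Every Bernstein–Vazirani oracle with nonzero key k < 2^n satisfies the
Haar promise with parameter h* = 1 + (position of the least significant
nonzero bit of k). -/
theorem bv_oracle_satisfies_haar_promise (n k : ℕ) (hk : 0 < k)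
    (hkn : k < 2 ^ n) :
    HaarPromise n (padicValNat 2 k + 1) (bvOracle n k) := by
  haveI := Fact.mk Nat.prime_two
  set v := padicValNat 2 k with hvdef
  have hpv : 2 ^ v ∣ k := pow_padicValNat_dvd
  have hvn : v < n := by
    have h1 : 2 ^ v ≤ k := Nat.le_of_dvd hk hpv
    exact (Nat.pow_lt_pow_iff_right (by norm_num)).mp (lt_of_le_of_lt h1 hkn)
  have hnd : ¬ 2 ^ (v + 1) ∣ k := pow_succ_padicValNat_not_dvd hk.ne'
  obtain ⟨m, hm⟩ := hpv
  have hmodd : m % 2 = 1 := by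
    rcases Nat.mod_two_eq_zero_or_one m with h | h
    · exfalso; apply hnd
      obtain ⟨c, hc⟩ : 2 ∣ m := Nat.dvd_of_mod_eq_zero h
      exact ⟨c, by rw [hm, hc, pow_succ]; ring⟩
    · exact h
  have hkv : Nat.testBit k v = true := by
    rw [Nat.testBit_eq_decide_div_mod_eq, hm, Nat.mul_div_cancel_left _ (Nat.two_pow_pos v)]
    simp [hmodd]
  have hkj : ∀ j < v, Nat.testBit k j = false := by
    intro j hj
    rw [Nat.testBit_eq_decide_div_mod_eq]
    have h2 : k / 2 ^ j = 2 ^ (v - j) * m := by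
      rw [hm, show (2:ℕ)^v = 2^j * 2^(v-j) by rw [← pow_add]; congr 1; omega,
        Nat.mul_assoc, Nat.mul_div_cancel_left _ (Nat.two_pow_pos j)]
    have h3 : 2 ∣ 2 ^ (v - j) * m := Dvd.dvd.mul_right (dvd_pow_self 2 (by omega)) m
    rw [h2, Nat.eq_zero_of_dvd_of_lt ((Nat.dvd_mod_iff (dvd_refl 2)).mpr h3) (by omega)]
    simp
  refine ⟨by omega, by omega,
    fun l => decide (Odd (∑ j ∈ Finset.Ico (v+1) n,
      if Nat.testBit (l-1) (j-(v+1)) && Nat.testBit k j then 1 else 0)), ?_⟩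
  intro l hl1 _ i
  obtain ⟨l', rfl⟩ : ∃ l', l = l' + 1 := ⟨l - 1, by omega⟩
  simp only [Nat.add_sub_cancel]
  set S : ℕ := ∑ j ∈ Finset.Ico (v+1) n,
      if Nat.testBit l' (j-(v+1)) && Nat.testBit k j then 1 else 0 with hS
  have key : ∀ r : ℕ, r < 2 ^ (v+1) → (i : ℕ) = 2^(v+1) * l' + r →
      bvOracle n k i = decide (Odd ((if Nat.testBit r v then 1 else 0) + S)) := by
    intro r hr hi
    have hsum : (∑ j ∈ Finset.range n,
        if Nat.testBit (i : ℕ) j && Nat.testBit k j then (1:ℕ) else 0)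
        = (if Nat.testBit r v then 1 else 0) + S := by
      rw [← Finset.sum_range_add_sum_Ico _ (show v+1 ≤ n by omega)]
      congr 1
      · rw [Finset.sum_range_succ,
          Finset.sum_eq_zero (fun j hj => by
            rw [hkj j (Finset.mem_range.mp hj)]; simp), zero_add]
        have ht : Nat.testBit (i : ℕ) v = Nat.testBit r v := by
          rw [hi, Nat.testBit_two_pow_mul_add _ hr]; simp
        rw [ht, hkv, Bool.and_true]
      · refine Finset.sum_congr rfl (fun j hj => ?_)
        have hj' := Finset.mem_Ico.mp hj
        rw [hi, Nat.testBit_two_pow_mul_add _ hr,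
          if_neg (show ¬ j < v + 1 by omega)]
    unfold bvOracle
    rw [hsum]
  have hP : (2:ℕ)^(v+1) = 2 * 2^v := by rw [pow_succ]; ring
  have e1 : 2^(v+1)*(2*(l'+1)-1) = 2*(2^(v+1)*l') + 2^(v+1) := by
    rw [show 2*(l'+1)-1 = 2*l'+1 by omega]; ring
  have e2 : 2^(v+1)*((l'+1)-1) = 2^(v+1)*l' := by norm_num
  have e3 : 2^(v+1)*(l'+1) = 2^(v+1)*l' + 2^(v+1) := by ring
  constructor
  · rintro ⟨h1, h2⟩
    rw [e1] at h2
    set r : ℕ := (i : ℕ) - 2^(v+1)*l' with hrdef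
    have hr : r < 2^(v+1) := by omega
    have hr2 : r < 2^v := by omega
    rw [key r hr (by omega), Nat.testBit_lt_two_pow hr2]
    simp
  · rintro ⟨h1, h2⟩
    rw [e3] at h2; rw [e1] at h1
    set r : ℕ := (i : ℕ) - 2^(v+1)*l' with hrdef
    have hr : r < 2^(v+1) := by omega
    have hrv : Nat.testBit r v = true := by
      have hdiv : r / 2 ^ v = 1 := Nat.div_eq_of_lt_le
        (by simp only [one_mul]; omega)
        (by simp only [Nat.succ_eq_add_one, add_mul, one_mul]; omega)
      rw [Nat.testBit_eq_decide_div_mod_eq, hdiv]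
      decide
    rw [key r hr (by omega), hrv]
    rw [if_pos rfl, add_comm, decide_eq_decide.mpr Nat.odd_add_one, decide_not]
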